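/- Let ω be an infinite string over {b,c,d} that is not eventually constant. Then for each n ≥ 0 there exists a nontrivial element t of the rigid stabilizer Rist(1^n) ∩ 𝔾_ω whose word length with respect to the generators (a, b_0, c_0, d_0) is at most 2^{n+2}. -/

import Mathlib

/-- The automorphism `a` of the rooted binary tree `{0,1}*` flipping the first bit. -/
def aFun : List Bool → List Bool
  | [] => []
  | x :: s => (!x) :: s

lemma aFun_invol : Function.Involutive aFun := by
  intro s; cases s <;> simp [aFun]

def aPerm : Equiv.Perm (List Bool) := aFun_invol.toPerm

/-- The alphabet `{b, c, d}` of defining strings of generalized Grigorchuk groups. -/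
inductive GLetter : Type
  | b | c | d
deriving DecidableEq

/-- The action of the generator `x_n` of `𝔾_ω`: it fixes `1^m` and sends
`1^m 0 s` to itself if `ω_{n+m} = x`, and to `1^m 0 a(s)` otherwise. -/
def xFun (ω : ℕ → GLetter) (x : GLetter) : ℕ → List Bool → List Bool
  | _, [] => []
  | n, true :: s => true :: xFun ω x (n + 1) s
  | n, false :: s => false :: (if ω n = x then s else aFun s)

lemma xFun_invol (ω : ℕ → GLetter) (x : GLetter) (n : ℕ) :
    Function.Involutive (xFun ω x n) := by
  intro s
  induction s generalizing n with
  | nil => rfl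
  | cons hd t ih =>
    cases hd
    · by_cases h : ω n = x <;> simp [xFun, h, aFun_invol t]
    · simp [xFun, ih]

def xPerm (ω : ℕ → GLetter) (x : GLetter) (n : ℕ) : Equiv.Perm (List Bool) :=
  (xFun_invol ω x n).toPerm

/-- The generalized Grigorchuk group `𝔾_ω = ⟨a, b₀, c₀, d₀⟩`. -/
def Grig (ω : ℕ → GLetter) : Subgroup (Equiv.Perm (List Bool)) :=
  Subgroup.closure {aPerm, xPerm ω GLetter.b 0, xPerm ω GLetter.c 0, xPerm ω GLetter.d 0}

----------------------------------------------------------------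
-- AUX
namespace Stmt18

@[simp] lemma aPerm_apply (u : List Bool) : aPerm u = aFun u := rfl
@[simp] lemma xPerm_apply (ω x n u) : xPerm ω x n u = xFun ω x n u := rfl

lemma aPerm_sq : aPerm * aPerm = 1 := by
  ext u; simp [Equiv.Perm.mul_apply, aFun_invol u]

lemma xPerm_sq (ω x n) : xPerm ω x n * xPerm ω x n = 1 := by
  ext u; simp [Equiv.Perm.mul_apply, xFun_invol ω x n u]

/-- symbols -/
inductive Sym : Type
  | A : Sym
  | L : GLetter → Sym
deriving DecidableEq

/-- evaluation of a symbol at level k -/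
def evalS (ω : ℕ → GLetter) (k : ℕ) : Sym → Equiv.Perm (List Bool)
  | Sym.A => aPerm
  | Sym.L x => xPerm ω x k

/-- evaluation of a word under an interpretation -/
def EV (h : Sym → Equiv.Perm (List Bool)) (w : List Sym) : Equiv.Perm (List Bool) :=
  (w.map h).prod

def brick (z : GLetter) : Sym → List Sym
  | Sym.A => [Sym.A, Sym.L z, Sym.A]
  | Sym.L x => [Sym.L x]

/-- the `a`-tower word: `AW ζ k i` is the word at level `k` of height `i`. -/
def AW (ζ : ℕ → GLetter) : ℕ → ℕ → List Sym
  | _, 0 => [Sym.A]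
  | k, (i+1) => (AW ζ (k+1) i).flatMap (brick (ζ k))

def TW (ζ : ℕ → GLetter) (X : GLetter) (k i : ℕ) : List Sym :=
  Sym.L X :: AW ζ k i

lemma TW_succ (ζ X k i) : TW ζ X k (i+1) = (TW ζ X (k+1) i).flatMap (brick (ζ k)) := by
  simp [TW, AW, brick, List.flatMap_cons]

/-- interpretation for the left section (junk) at level `k` -/
def junkI (ω : ℕ → GLetter) (k : ℕ) (z : GLetter) : Sym → Equiv.Perm (List Bool)
  | Sym.A => xPerm ω z (k+1)
  | Sym.L l => if ω k = l then 1 else aPerm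

lemma EV_nil (h) : EV h [] = 1 := rfl
lemma EV_cons (h s w) : EV h (s :: w) = h s * EV h w := by simp [EV]
lemma EV_append (h w₁ w₂) : EV h (w₁ ++ w₂) = EV h w₁ * EV h w₂ := by simp [EV]

lemma EV_flatMap (h f w) : EV h (w.flatMap f) = EV (fun s => EV h (f s)) w := by
  induction w with
  | nil => rfl
  | cons s w ih => simp [List.flatMap_cons, EV_append, EV_cons, ih]

lemma EV_apply_nil (h : Sym → Equiv.Perm (List Bool))
    (hh : ∀ s, (h s) ([] : List Bool) = []) (w : List Sym) : EV h w [] = [] := by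
  induction w with
  | nil => rfl
  | cons s w ih => rw [EV_cons]; simp [Equiv.Perm.mul_apply, ih, hh]

end Stmt18

namespace Stmt18

variable (ω ζ : ℕ → GLetter)

/-- M1: right section of a lifted word -/
lemma E_true (z : GLetter) (k : ℕ) (hz : ω k ≠ z) (w : List Sym) (s : List Bool) :
    EV (evalS ω k) (w.flatMap (brick z)) (true :: s)
      = true :: EV (evalS ω (k+1)) w s := by
  induction w generalizing s with
  | nil => rfl
  | cons sy w ih =>
    rw [List.flatMap_cons, EV_append, Equiv.Perm.mul_apply, ih]
    cases sy with
    | A =>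
      simp only [brick, EV_cons, EV_nil, mul_one, evalS, Equiv.Perm.mul_apply,
        aPerm_apply, xPerm_apply]
      simp [aFun, xFun, if_neg hz, EV_cons, evalS]
    | L x =>
      simp [brick, EV_cons, EV_nil, evalS, xFun]

/-- M2: left section of a lifted word -/
lemma E_false (z : GLetter) (k : ℕ) (w : List Sym) (s : List Bool) :
    EV (evalS ω k) (w.flatMap (brick z)) (false :: s)
      = false :: EV (junkI ω k z) w s := by
  induction w generalizing s with
  | nil => rfl
  | cons sy w ih =>
    rw [List.flatMap_cons, EV_append, Equiv.Perm.mul_apply, ih]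
    cases sy with
    | A =>
      simp only [brick, EV_cons, EV_nil, mul_one, evalS, Equiv.Perm.mul_apply,
        aPerm_apply, xPerm_apply, junkI]
      simp [aFun, xFun]
    | L x =>
      by_cases h : ω k = x <;>
        simp [brick, EV_cons, EV_nil, evalS, xFun, junkI, h, Equiv.Perm.mul_apply]

end Stmt18

namespace Stmt18

/-- abstract junk recursion: `Qgen c i g k'` -/
def Qgen (c : ℕ → Equiv.Perm (List Bool)) :
    ℕ → Equiv.Perm (List Bool) → ℕ → Equiv.Perm (List Bool)
  | 0, g, _ => g
  | (i+1), g, k' => Qgen c i (g * c k' * g) (k'+1)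

/-- the junk of the `a`-tower is given by `Qgen` -/
lemma EV_junk_AW (ω ζ : ℕ → GLetter) (k : ℕ) :
    ∀ (i k' : ℕ) (g : Equiv.Perm (List Bool)),
      EV (fun s => match s with
            | Sym.A => g
            | Sym.L l => if ω k = l then 1 else aPerm) (AW ζ k' i)
        = Qgen (fun j => if ω k = ζ j then 1 else aPerm) i g k' := by
  intro i
  induction i with
  | zero => intro k' g; simp [AW, EV_cons, EV_nil, Qgen]
  | succ i ih =>
    intro k' g
    rw [AW, EV_flatMap, Qgen]
    rw [← ih (k'+1) (g * (if ω k = ζ k' then 1 else aPerm) * g)]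
    congr 1
    funext s
    cases s with
    | A => simp [brick, EV_cons, EV_nil, mul_assoc]
    | L l => simp [brick, EV_cons, EV_nil]

lemma junkI_eq (ω ζ : ℕ → GLetter) (k : ℕ) :
    junkI ω k (ζ k) = (fun s => match s with
      | Sym.A => xPerm ω (ζ k) (k+1)
      | Sym.L l => if ω k = l then 1 else aPerm) := by
  funext s; cases s <;> rfl

/-- Q1 : Qgen of an involution is an involution (given c's are involutions) -/
lemma Qgen_sq (c : ℕ → Equiv.Perm (List Bool)) (hc : ∀ j, c j = 1 ∨ c j = aPerm) :
    ∀ (i : ℕ) (g : Equiv.Perm (List Bool)) (k' : ℕ), g * g = 1 →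
      Qgen c i g k' * Qgen c i g k' = 1 := by
  intro i
  induction i with
  | zero => intro g k' hg; simpa [Qgen] using hg
  | succ i ih =>
    intro g k' hg
    rw [Qgen]
    apply ih
    have hcc : c k' * c k' = 1 := by
      rcases hc k' with h | h <;> simp [h, aPerm_sq]
    calc g * c k' * g * (g * c k' * g) = g * c k' * (g * g) * c k' * g := by group
    _ = g * (c k' * c k') * g := by rw [hg]; group
    _ = 1 := by rw [hcc, mul_one, hg]
      
end Stmt18

namespace Stmt18

/-- closure of {1, a} under the recursion -/
lemma Qgen_mem (c : ℕ → Equiv.Perm (List Bool)) (hc : ∀ j, c j = 1 ∨ c j = aPerm) :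
    ∀ (i : ℕ) (g : Equiv.Perm (List Bool)) (k' : ℕ), (g = 1 ∨ g = aPerm) →
      (Qgen c i g k' = 1 ∨ Qgen c i g k' = aPerm) := by
  intro i
  induction i with
  | zero => intro g k' hg; simpa [Qgen] using hg
  | succ i ih =>
    intro g k' hg
    rw [Qgen]
    apply ih
    rcases hg with h | h <;> rcases hc k' with h' | h'
    · left; simp [h, h']
    · right; simp [h, h']
    · left; rw [h, h', mul_one, aPerm_sq]
    · right
      rw [h, h']
      calc aPerm * aPerm * aPerm = 1 * aPerm := by rw [aPerm_sq]
      _ = aPerm := one_mul _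

/-- freezing: if some `c` in range is `1`, the result lies in {1, a} -/
lemma Qgen_freeze (c : ℕ → Equiv.Perm (List Bool)) (hc : ∀ j, c j = 1 ∨ c j = aPerm) :
    ∀ (i : ℕ) (g : Equiv.Perm (List Bool)) (k' : ℕ), g * g = 1 →
      (∃ s, s < i ∧ c (k' + s) = 1) →
      (Qgen c i g k' = 1 ∨ Qgen c i g k' = aPerm) := by
  intro i
  induction i with
  | zero => rintro g k' _ ⟨s, hs, _⟩; omega
  | succ i ih =>
    rintro g k' hg ⟨s, hs, hcs⟩
    rw [Qgen]
    rcases Nat.eq_zero_or_pos s with rfl | hpos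
    · apply Qgen_mem c hc
      left
      rw [Nat.add_zero] at hcs
      rw [hcs, mul_one, hg]
    · refine ih _ _ ?_ ?_
      · calc g * c k' * g * (g * c k' * g) = g * c k' * (g * g) * c k' * g := by group
        _ = g * (c k' * c k') * g := by rw [hg]; group
        _ = 1 := by
            rcases hc k' with h | h
            · rw [h, mul_one, mul_one, hg]
            · rw [h, aPerm_sq, mul_one, hg]
      · exact ⟨s - 1, by omega, by rw [show k' + 1 + (s-1) = k' + s by omega]; exact hcs⟩

/-- no freeze: power formula -/
lemma Qgen_pow (c : ℕ → Equiv.Perm (List Bool)) :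
    ∀ (i : ℕ) (g : Equiv.Perm (List Bool)) (k' : ℕ),
      (∀ s, s < i → c (k' + s) = aPerm) →
      aPerm * Qgen c i g k' = (aPerm * g) ^ (2 ^ i) := by
  intro i
  induction i with
  | zero => intro g k' _; simp [Qgen]
  | succ i ih =>
    intro g k' hcs
    rw [Qgen]
    have h0 : c k' = aPerm := by simpa using hcs 0 (by omega)
    rw [h0]
    rw [ih (g * aPerm * g) (k'+1) (fun s hs => by
      rw [show k' + 1 + s = k' + (s+1) by omega]; exact hcs (s+1) (by omega))]
    have : aPerm * (g * aPerm * g) = (aPerm * g) ^ 2 := by rw [pow_two]; group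
    rw [this, ← pow_mul]
    congr 1
    rw [pow_succ]
    ring

end Stmt18

namespace Stmt18

lemma aPerm_kappa_sq_apply (ω : ℕ → GLetter) (m : ℕ) (u : List Bool) :
    ((aPerm * xPerm ω (ω m) m) ^ 2) u
      = match u with
        | [] => []
        | b :: s => b :: xFun ω (ω m) (m+1) s := by
  rw [pow_two]
  match u with
  | [] => rfl
  | true :: s =>
      simp [Equiv.Perm.mul_apply, xFun, aFun]
  | false :: s =>
      simp [Equiv.Perm.mul_apply, xFun, aFun]

lemma D4 (ω : ℕ → GLetter) (m : ℕ) : (aPerm * xPerm ω (ω m) m) ^ 4 = 1 := by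
  have h4 : (4 : ℕ) = 2 * 2 := rfl
  rw [h4, pow_mul]
  ext u
  rw [pow_two, Equiv.Perm.mul_apply, aPerm_kappa_sq_apply, aPerm_kappa_sq_apply]
  match u with
  | [] => rfl
  | b :: s => simp [xFun_invol ω (ω m) (m+1) s]

end Stmt18

namespace Stmt18

variable (ω ζ : ℕ → GLetter) (X : GLetter)

/-- left-section (junk) element at level `k` for a tower of height `i` above -/
def Jel (k i : ℕ) : Equiv.Perm (List Bool) :=
  EV (junkI ω k (ζ k)) (TW ζ X (k+1) i)

lemma Jel_eq (k i : ℕ) :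
    Jel ω ζ X k i = (if ω k = X then 1 else aPerm) *
      Qgen (fun j => if ω k = ζ j then 1 else aPerm) i (xPerm ω (ζ k) (k+1)) (k+1) := by
  rw [Jel, TW, EV_cons, junkI_eq ω ζ k, EV_junk_AW ω ζ k i (k+1)]

lemma evalS_nil (k : ℕ) (s : Sym) : (evalS ω k s) ([] : List Bool) = [] := by
  cases s <;> rfl

/-- main induction: squares of towers fix everything off `1^i` -/
lemma main_fix : ∀ (i k : ℕ),
    (∀ j, j < i → ζ (k+j) ≠ ω (k+j)) →
    (∀ j, j < i → Jel ω ζ X (k+j) (i-1-j) * Jel ω ζ X (k+j) (i-1-j) = 1) →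
    ∀ u : List Bool, ¬ (List.replicate i true <+: u) →
      (EV (evalS ω k) (TW ζ X k i)) ((EV (evalS ω k) (TW ζ X k i)) u) = u := by
  intro i
  induction i with
  | zero =>
    intro k _ _ u hu
    exact absurd (List.nil_prefix) hu
  | succ i ih =>
    intro k hζ hJ u hu
    rw [TW_succ]
    match u with
    | [] => rw [EV_apply_nil _ (evalS_nil ω k), EV_apply_nil _ (evalS_nil ω k)]
    | false :: s =>
      rw [E_false, E_false]
      have h0 := hJ 0 (by omega)
      simp only [Nat.add_zero, Nat.add_sub_cancel] at h0
      have : (Jel ω ζ X k i) ((Jel ω ζ X k i) s) = s := by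
        have := congrArg (fun p => p s) h0
        simpa [Equiv.Perm.mul_apply] using this
      rw [show EV (junkI ω k (ζ k)) (TW ζ X (k+1) i) = Jel ω ζ X k i from rfl, this]
    | true :: s =>
      have hz : ω k ≠ ζ k := by
        have := hζ 0 (by omega); simp only [Nat.add_zero] at this; exact fun h => this h.symm
      rw [E_true ω (ζ k) k hz, E_true ω (ζ k) k hz]
      have hpre : ¬ (List.replicate i true <+: s) := by
        intro hp; exact hu (by simpa [List.replicate_succ] using hp)
      have := ih (k+1) (fun j hj => by
          have := hζ (j+1) (by omega)
          simpa [Nat.add_assoc, Nat.add_comm 1 j] using this)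
        (fun j hj => by
          have := hJ (j+1) (by omega)
          have e1 : k + (j+1) = k + 1 + j := by omega
          have e2 : i + 1 - 1 - (j+1) = i - 1 - j := by omega
          rwa [e1, e2] at this) s hpre
      rw [this]

/-- spine: the section of a tower at `1^i` -/
lemma spine : ∀ (i k : ℕ),
    (∀ j, j < i → ζ (k+j) ≠ ω (k+j)) →
    ∀ s : List Bool,
      (EV (evalS ω k) (TW ζ X k i)) (List.replicate i true ++ s)
        = List.replicate i true ++ (EV (evalS ω (k+i)) (TW ζ X (k+i) 0)) s := by
  intro i
  induction i with
  | zero => intro k _ s; simp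
  | succ i ih =>
    intro k hζ s
    have hz : ω k ≠ ζ k := by
      have := hζ 0 (by omega); simp only [Nat.add_zero] at this; exact fun h => this h.symm
    rw [TW_succ, List.replicate_succ, List.cons_append, E_true ω (ζ k) k hz]
    rw [ih (k+1) (fun j hj => by
      have := hζ (j+1) (by omega)
      simpa [Nat.add_assoc, Nat.add_comm 1 j] using this) s]
    rw [show k + 1 + i = k + (i+1) by omega]
    simp

lemma base_eval (m : ℕ) :
    EV (evalS ω m) (TW ζ X m 0) = xPerm ω X m * aPerm := by
  simp [TW, AW, EV_cons, EV_nil, evalS]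

/-- deep action of a letter -/
lemma xFun_deep (x : GLetter) : ∀ (d k : ℕ) (w : List Bool),
    xFun ω x k (List.replicate d true ++ false :: w)
      = List.replicate d true ++ false :: (if ω (k+d) = x then w else aFun w) := by
  intro d
  induction d with
  | zero => intro k w; simp [xFun]
  | succ d ih =>
    intro k w
    rw [List.replicate_succ, List.cons_append, xFun, ih (k+1) w,
      show k + 1 + d = k + (d+1) by omega]
    simp

/-- the base square moves something below `1^n0` -/
lemma base_moves (hω : ∀ (x : GLetter) (N : ℕ), ∃ m, N ≤ m ∧ ω m ≠ x) (m : ℕ) :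
    ∃ v : List Bool,
      ((xPerm ω X m * aPerm) * (xPerm ω X m * aPerm)) (false :: v) ≠ false :: v := by
  have step : ∀ v : List Bool, ((xPerm ω X m * aPerm) * (xPerm ω X m * aPerm)) (false :: v)
      = false :: (if ω m = X then xFun ω X (m+1) v else aFun (xFun ω X (m+1) v)) := by
    intro v
    simp only [Equiv.Perm.mul_apply, aPerm_apply, xPerm_apply]
    rw [show aFun (false :: v) = true :: v from rfl]
    rw [show xFun ω X m (true :: v) = true :: xFun ω X (m+1) v from rfl]
    rw [show aFun (true :: xFun ω X (m+1) v) = false :: xFun ω X (m+1) v from rfl]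
    rw [show xFun ω X m (false :: xFun ω X (m+1) v)
        = false :: (if ω m = X then xFun ω X (m+1) v else aFun (xFun ω X (m+1) v)) from rfl]
  by_cases h : ω m = X
  · obtain ⟨m₀, hm₀, hne⟩ := hω X (m+1)
    refine ⟨List.replicate (m₀ - (m+1)) true ++ [false, true], ?_⟩
    rw [step, if_pos h, xFun_deep, show m + 1 + (m₀ - (m+1)) = m₀ by omega, if_neg hne]
    intro hcontra
    have := List.cons.injEq .. ▸ hcontra
    simp [List.append_cancel_left_eq, aFun] at hcontra
  · refine ⟨[true], ?_⟩
    rw [step, if_neg h, show xFun ω X (m+1) [true] = [true] from rfl]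
    simp [aFun]

/-- length bookkeeping -/
lemma brick_counts (z : GLetter) : ∀ w : List Sym,
    (w.flatMap (brick z)).length = w.length + 2 * (w.count Sym.A) ∧
    ((w.flatMap (brick z)).count Sym.A) = 2 * (w.count Sym.A) := by
  intro w
  induction w with
  | nil => simp
  | cons s w ih =>
    obtain ⟨ih1, ih2⟩ := ih
    cases s with
    | A =>
      constructor
      · simp [List.flatMap_cons, brick, ih1, List.count_cons]; omega
      · simp [List.flatMap_cons, brick, ih2, List.count_cons]; omega
    | L x =>
      constructor
      · simp [List.flatMap_cons, brick, ih1, List.count_cons]; omega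
      · simp [List.flatMap_cons, brick, ih2, List.count_cons]

lemma AW_counts : ∀ (i k : ℕ),
    (AW ζ k i).length + 1 = 2^(i+1) ∧ (AW ζ k i).count Sym.A = 2^i := by
  intro i
  induction i with
  | zero => intro k; simp [AW]
  | succ i ih =>
    intro k
    obtain ⟨ih1, ih2⟩ := ih (k+1)
    obtain ⟨h1, h2⟩ := brick_counts (ζ k) (AW ζ (k+1) i)
    rw [AW]
    constructor
    · rw [h1, ih2]
      have : (AW ζ (k+1) i).length = 2^(i+1) - 1 := by omega
      rw [this]
      have h2i : 1 ≤ 2^(i+1) := Nat.one_le_two_pow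
      rw [pow_succ, pow_succ]
      omega
    · rw [h2, ih2, pow_succ]; ring

lemma TW_length (i k : ℕ) : (TW ζ X k i).length = 2^(i+1) := by
  have := (AW_counts ζ i k).1
  simp [TW]
  omega

/-- third letter -/
def oth : GLetter → GLetter → GLetter
  | GLetter.b, GLetter.b => GLetter.c
  | GLetter.b, GLetter.c => GLetter.d
  | GLetter.b, GLetter.d => GLetter.c
  | GLetter.c, GLetter.b => GLetter.d
  | GLetter.c, GLetter.c => GLetter.d
  | GLetter.c, GLetter.d => GLetter.b
  | GLetter.d, GLetter.b => GLetter.c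
  | GLetter.d, GLetter.c => GLetter.b
  | GLetter.d, GLetter.d => GLetter.b

lemma oth_ne_left : ∀ p q, oth p q ≠ p := by intro p q; cases p <;> cases q <;> decide
lemma oth_ne_right : ∀ p q, oth p q ≠ q := by intro p q; cases p <;> cases q <;> decide
lemma eq_oth_of_ne : ∀ x p q, x ≠ p → x ≠ q → p ≠ q → x = oth p q := by intro x p q; cases x <;> cases p <;> cases q <;> decide

/-- the selection of the letters `ζ` -/
lemma selection (n : ℕ) :
    ∃ ζ : ℕ → GLetter, ∀ k, k < n → (ζ k ≠ ω k) ∧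
      ((∃ j, k < j ∧ j < n ∧ ζ j = ω k) ∨ ω k = ω (n-1) ∨
        (k + 1 < n ∧ ζ k = ω (k+1))) := by
  classical
  set P : ℕ → Prop := fun k => k + 1 < n ∧ ω k = ω (k+1) ∧ ω k ≠ ω (n-1) with hP
  have instP : DecidablePred P := fun k => by rw [hP]; infer_instance
  set dflt : ℕ → GLetter := fun j => if ω (j+1) = ω j then oth (ω j) (ω j) else ω (j+1)
    with hdflt
  have dflt_ne : ∀ j, dflt j ≠ ω j := by
    intro j; rw [hdflt]; dsimp only
    by_cases h : ω (j+1) = ω j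
    · rw [if_pos h]; exact oth_ne_left _ _
    · rw [if_neg h]; exact h
  by_cases hex : ∃ k, P k
  · obtain ⟨k₀, hk₀⟩ := hex
    set K := Nat.findGreatest P n with hK
    have hPK : P K := Nat.findGreatest_spec (le_of_lt (by omega : k₀ < n)) hk₀
    have hKlt : K < n - 1 := by omega
    have hmax : ∀ j, K < j → j ≤ n → ¬ P j := fun j h1 h2 =>
      Nat.findGreatest_is_greatest h1 h2
    refine ⟨fun j => if j = n-1 then ω K else if j = K then oth (ω K) (ω (n-1)) else dflt j,
      fun k hk => ?_⟩
    dsimp only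
    constructor
    · by_cases h1 : k = n-1
      · rw [if_pos h1, h1]; exact hPK.2.2
      · rw [if_neg h1]
        by_cases h2 : k = K
        · rw [if_pos h2, h2]; exact oth_ne_left _ _
        · rw [if_neg h2]; exact dflt_ne k
    · by_cases h1 : k = n - 1
      · right; left; rw [h1]
      · have hkn1 : k < n - 1 := by omega
        by_cases hgood : ω (k+1) = ω k
        · -- bad level
          by_cases hX : ω k = ω (n-1)
          · right; left; exact hX
          · have hPk : P k := ⟨by omega, hgood.symm, hX⟩
            have hkK : k ≤ K := le_of_not_gt (fun h => hmax k h (by omega) hPk)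
            by_cases hkk : ω k = ω K
            · left
              exact ⟨n-1, by omega, by omega,
                by simp only [reduceIte]; exact hkk.symm⟩
            · left
              have hkK' : k < K := lt_of_le_of_ne hkK (fun h => hkk (by rw [h]))
              refine ⟨K, hkK', by omega, ?_⟩
              rw [if_neg (by omega : K ≠ n-1), if_pos rfl]
              exact (eq_oth_of_ne (ω k) (ω K) (ω (n-1)) hkk hX hPK.2.2).symm
        · -- good level
          right; right
          refine ⟨by omega, ?_⟩
          have hknK : k ≠ K := by
            intro h; rw [h] at hgood; exact hgood (hPK.2.1.symm)
          rw [if_neg h1, if_neg hknK, hdflt]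
          dsimp only
          rw [if_neg hgood]
  · refine ⟨dflt, fun k hk => ⟨dflt_ne k, ?_⟩⟩
    by_cases h1 : k = n - 1
    · right; left; rw [h1]
    · by_cases hgood : ω (k+1) = ω k
      · right; left
        by_contra hX
        exact hex ⟨k, by omega, hgood.symm, hX⟩
      · right; right
        refine ⟨by omega, ?_⟩
        rw [hdflt]; dsimp only; rw [if_neg hgood]

/-- all junk elements are involutions -/
lemma certs (n : ℕ) (ζ : ℕ → GLetter)
    (hsel : ∀ k, k < n → (ζ k ≠ ω k) ∧
      ((∃ j, k < j ∧ j < n ∧ ζ j = ω k) ∨ ω k = ω (n-1) ∨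
        (k + 1 < n ∧ ζ k = ω (k+1)))) :
    ∀ k, k < n → Jel ω ζ (ω (n-1)) k (n-1-k) * Jel ω ζ (ω (n-1)) k (n-1-k) = 1 := by
  intro k hk
  set i := n - 1 - k with hi
  set c : ℕ → Equiv.Perm (List Bool) := fun j => if ω k = ζ j then 1 else aPerm with hc
  have hcv : ∀ j, c j = 1 ∨ c j = aPerm := by
    intro j; rw [hc]; dsimp only
    by_cases h : ω k = ζ j
    · left; rw [if_pos h]
    · right; rw [if_neg h]
  set z := xPerm ω (ζ k) (k+1) with hzdef
  have hz : z * z = 1 := xPerm_sq ω (ζ k) (k+1)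
  rw [Jel_eq]
  by_cases hB : ω k = ω (n-1)
  · rw [if_pos hB, one_mul]
    exact Qgen_sq c hcv i z (k+1) hz
  · rw [if_neg hB]
    by_cases hA : ∃ j, k < j ∧ j < n ∧ ζ j = ω k
    · obtain ⟨j, hj1, hj2, hj3⟩ := hA
      have hfr : ∃ s, s < i ∧ c ((k+1) + s) = 1 := by
        refine ⟨j - (k+1), ?_, ?_⟩
        · omega
        · rw [show k + 1 + (j - (k+1)) = j by omega, hc]
          dsimp only
          rw [if_pos hj3.symm]
      rcases Qgen_freeze c hcv i z (k+1) hz hfr with h | h <;> rw [h]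
      · rw [mul_one, aPerm_sq]
      · rw [aPerm_sq, one_mul]
    · rcases (hsel k hk).2 with hA' | hB' | ⟨hkn, hzk⟩
      · exact absurd hA' hA
      · exact absurd hB' hB
      · have hi1 : 1 ≤ i := by omega
        have hpw : ∀ s, s < i → c ((k+1) + s) = aPerm := by
          intro s hs
          rw [hc]; dsimp only
          rw [if_neg]
          intro he
          exact hA ⟨k + 1 + s, by omega, by omega, he.symm⟩
        rw [Qgen_pow c i z (k+1) hpw]
        obtain ⟨i', hii⟩ : ∃ i', i = i' + 1 := ⟨i - 1, by omega⟩
        rw [hii, ← pow_add]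
        have h24 : 2^(i'+1) + 2^(i'+1) = 4 * 2^i' := by rw [pow_succ]; ring
        rw [h24, pow_mul, hzdef, hzk, D4, one_pow]

end Stmt18

open Stmt18

/-- If `ω` is not eventually constant, then for each `n` the rigid stabilizer
`Rist(1^n) ∩ 𝔾_ω` contains a nontrivial element of word length at most `2^{n+2}`
with respect to the generators `(a, b₀, c₀, d₀)` (which are involutions). -/
theorem stmt18 (ω : ℕ → GLetter)
    (hω : ¬ ∃ (x : GLetter) (N : ℕ), ∀ m ≥ N, ω m = x) (n : ℕ) :
    ∃ t : Equiv.Perm (List Bool), t ∈ Grig ω ∧ t ≠ 1 ∧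
      (∀ u : List Bool, ¬ (List.replicate n true <+: u) → t u = u) ∧
      ∃ l : List (Equiv.Perm (List Bool)), l.length ≤ 2 ^ (n + 2) ∧
        (∀ g ∈ l, g ∈ ({aPerm, xPerm ω GLetter.b 0, xPerm ω GLetter.c 0,
          xPerm ω GLetter.d 0} : Set (Equiv.Perm (List Bool)))) ∧
        l.prod = t := by
  classical
  have hω' : ∀ (x : GLetter) (N : ℕ), ∃ m, N ≤ m ∧ ω m ≠ x := by
    intro x N
    by_contra h
    push_neg at h
    exact hω ⟨x, N, fun m hm => h m hm⟩
  obtain ⟨ζ, hsel⟩ := selection ω n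
  set X := ω (n-1) with hX
  set W := TW ζ X 0 n with hW
  set g := EV (evalS ω 0) W with hg
  have hζne : ∀ j, j < n → ζ (0 + j) ≠ ω (0 + j) := by
    intro j hj; rw [Nat.zero_add]; exact (hsel j hj).1
  -- membership of each generator image
  have hmem : ∀ s : Sym, evalS ω 0 s ∈ ({aPerm, xPerm ω GLetter.b 0, xPerm ω GLetter.c 0,
      xPerm ω GLetter.d 0} : Set (Equiv.Perm (List Bool))) := by
    intro s
    cases s with
    | A => left; rfl
    | L x => cases x with
      | b => right; left; rfl
      | c => right; right; left; rfl
      | d => right; right; right; rfl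
  have hgG : g ∈ Grig ω := by
    rw [hg, EV]
    apply Subgroup.list_prod_mem
    intro p hp
    obtain ⟨s, _, rfl⟩ := List.mem_map.mp hp
    exact Subgroup.subset_closure (hmem s)
  refine ⟨g * g, mul_mem hgG hgG, ?_, ?_, ?_⟩
  · -- nontrivial
    obtain ⟨v, hv⟩ := base_moves ω X hω' n
    intro hcontra
    have happ := congrArg (fun p => p (List.replicate n true ++ (false :: v))) hcontra
    simp only [Equiv.Perm.mul_apply, Equiv.Perm.one_apply] at happ
    rw [hg, spine ω ζ X n 0 hζne] at happ
    rw [spine ω ζ X n 0 hζne] at happ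
    rw [Nat.zero_add, base_eval ω ζ X n] at happ
    have : ((xPerm ω X n * aPerm) * (xPerm ω X n * aPerm)) (false :: v) = false :: v := by
      have := List.append_cancel_left happ
      simpa [Equiv.Perm.mul_apply] using this
    exact hv this
  · -- rigid stabilizer property
    intro u hu
    have := main_fix ω ζ X n 0 hζne
      (fun j hj => by
        have := certs ω n ζ hsel j hj
        rwa [Nat.zero_add]) u hu
    simpa [Equiv.Perm.mul_apply, hg, hW] using this
  · -- the word
    refine ⟨(W ++ W).map (evalS ω 0), ?_, ?_, ?_⟩
    · rw [List.length_map, List.length_append, hW, TW_length]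
      have : 2^(n+1) + 2^(n+1) = 2^(n+2) := by ring
      omega
    · intro p hp
      obtain ⟨s, _, rfl⟩ := List.mem_map.mp hp
      exact hmem s
    · rw [List.map_append, List.prod_append]
      rfl
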